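/- The normal trace of φ̃_h on the lower spherical cap equals the normal trace of the vertical unit vector e₃: for every r ∈ (0,δ), writing z_s(r) = h + γ_s(r) and using the normal n = −r e_r + √(1−r²) e_z to the sphere, one has the identity (r²/2)·∂_zΨ(r, z_s(r)) + (√(1−r²)/(2r))·∂_r[r²Ψ(r,z)]|_{z = z_s(r)} = √(1−r²), where ∂_r is the partial derivative in r at fixed z. -/

import Mathlib

open Real MeasureTheory intervalIntegral

noncomputable section

/-- `γ_s(r) = 1 - √(1 - r²)`. -/
def gam (r : ℝ) : ℝ := 1 - Real.sqrt (1 - r ^ 2)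

/-- `α_P(r) = (h + γ_s(r)) / β_Ω`. -/
def aP (βΩ h r : ℝ) : ℝ := (h + gam r) / βΩ

/-- `α_S(r) = (1/β_S + 2) (h + γ_s(r))`. -/
def aS (βS h r : ℝ) : ℝ := (1 / βS + 2) * (h + gam r)

/-- The cubic `Φ(r,t) = P₁(r) t + P₂(r) t² + P₃(r) t³` of the slip case. -/
def Phi (βS βΩ h r t : ℝ) : ℝ :=
  6 * (2 + aS βS h r) / (12 + 4 * (aS βS h r + aP βΩ h r) + aS βS h r * aP βΩ h r) * t +
  3 * (2 + aS βS h r) * aP βΩ h r / (12 + 4 * (aS βS h r + aP βΩ h r) + aS βS h r * aP βΩ h r) * t ^ 2 +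
  -(2 * (aS βS h r + aS βS h r * aP βΩ h r + aP βΩ h r)) / (12 + 4 * (aS βS h r + aP βΩ h r) + aS βS h r * aP βΩ h r) * t ^ 3

/-- `Ψ(r,z) = Φ(r, z / (h + γ_s(r)))`. -/
def Psi (βS βΩ h r z : ℝ) : ℝ := Phi βS βΩ h r (z / (h + gam r))

/-- Partial derivative in the first (`r`) variable. -/
def dR (f : ℝ → ℝ → ℝ) : ℝ → ℝ → ℝ := fun r z => deriv (fun r' => f r' z) r

/-- Partial derivative in the second (`z`) variable. -/
def dZ (f : ℝ → ℝ → ℝ) : ℝ → ℝ → ℝ := fun r z => deriv (fun z' => f r z') z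

set_option maxHeartbeats 1000000
/-- On the lower spherical cap `z = z_s(r) = h + γ_s(r)` with (non-unit) normal
`n = −r e_r + √(1−r²) e_z`, the normal trace of `φ̃_h` equals that of `e₃`:
`(r²/2) ∂_zΨ(r,z_s(r)) + (√(1−r²)/(2r)) ∂_r[r²Ψ(r,z)]|_{z=z_s(r)} = √(1−r²)`. -/
theorem tphi_normal_trace_on_sphere (δ βS βΩ h : ℝ) (hδ : δ ∈ Set.Ioo (0 : ℝ) (1 / 4))
    (hβS : 0 < βS) (hβΩ : 0 < βΩ) (hh : 0 < h) :
    ∀ r : ℝ, 0 < r → r < δ →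
      r ^ 2 / 2 * dZ (Psi βS βΩ h) r (h + gam r) +
        Real.sqrt (1 - r ^ 2) / (2 * r) *
          deriv (fun r' => r' ^ 2 * Psi βS βΩ h r' (h + gam r)) r =
      Real.sqrt (1 - r ^ 2) := by
  intro r hr0 hrδ
  have hr1 : r < 1 := lt_trans hrδ (lt_trans hδ.2 (by norm_num))
  have hr2 : (0:ℝ) < 1 - r ^ 2 := by nlinarith
  have hs0 : 0 < Real.sqrt (1 - r ^ 2) := Real.sqrt_pos.mpr hr2
  set s := Real.sqrt (1 - r ^ 2) with hs_def
  have hrne : r ≠ 0 := ne_of_gt hr0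
  have hsne : s ≠ 0 := ne_of_gt hs0
  have hβSne : βS ≠ 0 := ne_of_gt hβS
  have hβΩne : βΩ ≠ 0 := ne_of_gt hβΩ
  have hcpos : (0:ℝ) < 1 / βS + 2 := by positivity
  have hgamn : ∀ x : ℝ, 0 ≤ gam x := by
    intro x
    have h1 : Real.sqrt (1 - x ^ 2) ≤ 1 := Real.sqrt_le_one.mpr (by nlinarith [sq_nonneg x])
    simp only [gam]
    linarith
  have hxpos : ∀ x : ℝ, 0 < h + gam x := fun x => by have := hgamn x; linarith
  have hxne : ∀ x : ℝ, h + gam x ≠ 0 := fun x => ne_of_gt (hxpos x)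
  have hDne : ∀ x : ℝ,
      (12 + 4 * (aS βS h x + aP βΩ h x) + aS βS h x * aP βΩ h x) ≠ 0 := by
    intro x
    have h1 := hxpos x
    have h2 : 0 < aS βS h x := mul_pos hcpos h1
    have h3 : 0 < aP βΩ h x := div_pos h1 hβΩ
    nlinarith
  have hg : HasDerivAt gam (r / s) r := by
    have h1 : HasDerivAt (fun r' : ℝ => 1 - r' ^ 2) (-(2 * r)) r := by
      simpa using (hasDerivAt_pow 2 r).const_sub 1
    have h2 := (Real.hasDerivAt_sqrt (ne_of_gt hr2)).comp r h1
    have h3 : HasDerivAt (fun r' : ℝ => 1 - Real.sqrt (1 - r' ^ 2))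
        (-(1 / (2 * Real.sqrt (1 - r ^ 2)) * -(2 * r))) r := h2.const_sub 1
    have h4 : HasDerivAt gam (-(1 / (2 * Real.sqrt (1 - r ^ 2)) * -(2 * r))) r := h3
    convert h4 using 1
    rw [← hs_def]
    field_simp
  have hfH : HasDerivAt (fun r' => h + gam r') (r / s) r := hg.const_add h
  have hfa : HasDerivAt (fun r' => aS βS h r') ((1/βS+2) * (r/s)) r := hfH.const_mul _
  have hfp : HasDerivAt (fun r' => aP βΩ h r') ((r/s) / βΩ) r := hfH.div_const _
  -- the z-derivative
  have hzval : dZ (Psi βS βΩ h) r (h + gam r)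
      = (12 + 6 * aP βΩ h r) /
        ((12 + 4 * (aS βS h r + aP βΩ h r) + aS βS h r * aP βΩ h r) * (h + gam r)) := by
    have ht0 : HasDerivAt (fun z' : ℝ => z' / (h + gam r)) (1 / (h + gam r)) (h + gam r) :=
      (hasDerivAt_id _).div_const _
    have hz' := ((ht0.const_mul (6 * (2 + aS βS h r) /
        (12 + 4 * (aS βS h r + aP βΩ h r) + aS βS h r * aP βΩ h r))).add
      ((ht0.pow 2).const_mul (3 * (2 + aS βS h r) * aP βΩ h r /
        (12 + 4 * (aS βS h r + aP βΩ h r) + aS βS h r * aP βΩ h r)))).add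
      ((ht0.pow 3).const_mul (-(2 * (aS βS h r + aS βS h r * aP βΩ h r + aP βΩ h r)) /
        (12 + 4 * (aS βS h r + aP βΩ h r) + aS βS h r * aP βΩ h r)))
    have hz : HasDerivAt (fun z' => Psi βS βΩ h r z') _ (h + gam r) := hz'
    simp only [dZ]
    rw [hz.deriv]
    have h1 := hxne r
    have h2 := hDne r
    norm_num
    field_simp
    ring
  -- rewrite the radial function as a single quotient
  have hfun : (fun r' => r' ^ 2 * Psi βS βΩ h r' (h + gam r)) = (fun r' =>
      r' ^ 2 * ((6 * (2 + aS βS h r') * (h + gam r) * (h + gam r') ^ 2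
        + 3 * (2 + aS βS h r') * aP βΩ h r' * (h + gam r) ^ 2 * (h + gam r')
        - 2 * (aS βS h r' + aS βS h r' * aP βΩ h r' + aP βΩ h r') * (h + gam r) ^ 3) /
       ((12 + 4 * (aS βS h r' + aP βΩ h r') + aS βS h r' * aP βΩ h r')
          * (h + gam r') ^ 3))) := by
    funext x
    have h1 := hxne x
    have h2 := hDne x
    simp only [Psi, Phi]
    field_simp
    ring
  have ht1 := (((hfa.const_add 2).const_mul 6).mul_const (h + gam r)).mul (hfH.pow 2)
  have ht2 := ((((hfa.const_add 2).const_mul 3).mul hfp).mul_const ((h + gam r) ^ 2)).mul hfH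
  have ht3 := (((hfa.add (hfa.mul hfp)).add hfp).const_mul 2).mul_const ((h + gam r) ^ 3)
  have hnum := (ht1.add ht2).sub ht3
  have hden := (((((hfa.add hfp).const_mul 4).const_add 12).add
      (hfa.mul hfp))).mul (hfH.pow 3)
  have hdenne : (12 + 4 * (aS βS h r + aP βΩ h r) + aS βS h r * aP βΩ h r)
      * (h + gam r) ^ 3 ≠ 0 := mul_ne_zero (hDne r) (pow_ne_zero 3 (hxne r))
  have hR := (hasDerivAt_pow 2 r).mul (hnum.div hden hdenne)
  have hRval : deriv (fun r' => r' ^ 2 * Psi βS βΩ h r' (h + gam r)) r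
      = 2 * r - r ^ 3 / (s * (h + gam r)) * ((12 + 6 * aP βΩ h r) /
        (12 + 4 * (aS βS h r + aP βΩ h r) + aS βS h r * aP βΩ h r)) := by
    have hR' : HasDerivAt (fun r' =>
        r' ^ 2 * ((6 * (2 + aS βS h r') * (h + gam r) * (h + gam r') ^ 2
          + 3 * (2 + aS βS h r') * aP βΩ h r' * (h + gam r) ^ 2 * (h + gam r')
          - 2 * (aS βS h r' + aS βS h r' * aP βΩ h r' + aP βΩ h r') * (h + gam r) ^ 3) /
         ((12 + 4 * (aS βS h r' + aP βΩ h r') + aS βS h r' * aP βΩ h r')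
            * (h + gam r') ^ 3))) _ r := hR
    rw [hfun, hR'.deriv]
    have h1 := hxne r
    have h2 := hDne r
    norm_num
    field_simp
    ring
  rw [hzval, hRval]
  have h1 := hxne r
  have h2 := hDne r
  field_simp
  ring
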